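/- Let {ψ_n}_{n=0}^∞ be the orthonormal basis of L²(0,1) obtained by Gram–Schmidt applied to {sⁿe^s}_{n=0}^∞, and set a_{mn} = ⟨ψ_n', ψ_m⟩. For every integer k ≥ 1, the k×k matrix M_k = (a_{mn})_{m,n=0}^{k-1} is upper triangular with all diagonal entries equal to 1; in particular det(M_k) = 1 and M_k is invertible. -/

import Mathlib

open MeasureTheory Real intervalIntegral

private lemma expand_integral (ψ : ℕ → ℝ → ℝ)
    (hψ : ∀ n, Continuous (ψ n)) (j m : ℕ) (c : Fin (j + 1) → ℝ)
    (hcs : ∀ s : ℝ, ψ j s = ∑ i : Fin (j + 1), c i * s ^ (i : ℕ) * Real.exp s) :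
    (∫ s in (0:ℝ)..1, ψ j s * ψ m s)
      = ∑ i : Fin (j + 1), c i * ∫ s in (0:ℝ)..1, s ^ (i : ℕ) * Real.exp s * ψ m s := by
  have h1 : ∀ s : ℝ, ψ j s * ψ m s
      = ∑ i : Fin (j + 1), c i * (s ^ (i : ℕ) * Real.exp s * ψ m s) := by
    intro s
    rw [hcs s, Finset.sum_mul]
    exact Finset.sum_congr rfl (fun i _ => by ring)
  simp only [h1]
  rw [intervalIntegral.integral_finset_sum]
  · exact Finset.sum_congr rfl (fun i _ => intervalIntegral.integral_const_mul _ _)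
  · intro i _
    exact (continuous_const.mul (((continuous_pow _).mul Real.continuous_exp).mul
      (hψ m))).intervalIntegrable _ _

private lemma key_zero (ψ : ℕ → ℝ → ℝ)
    (hψ : ∀ n, Continuous (ψ n))
    (horth : ∀ m n : ℕ, (∫ s in (0:ℝ)..1, ψ m s * ψ n s) = if m = n then 1 else 0)
    (hform : ∀ n : ℕ, ∃ c : Fin (n + 1) → ℝ,
      c ⟨n, Nat.lt_succ_self n⟩ ≠ 0 ∧
      ∀ s : ℝ, ψ n s = ∑ k : Fin (n + 1), c k * s ^ (k : ℕ) * Real.exp s) :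
    ∀ j m : ℕ, j < m → (∫ s in (0:ℝ)..1, s ^ j * Real.exp s * ψ m s) = 0 := by
  intro j
  induction j using Nat.strong_induction_on with
  | _ j ih =>
    intro m hjm
    obtain ⟨c, hc0, hcs⟩ := hform j
    have h1 := expand_integral ψ hψ j m c hcs
    rw [horth j m, if_neg (Nat.ne_of_lt hjm)] at h1
    rw [Fin.sum_univ_castSucc] at h1
    have h2 : ∀ i : Fin j,
        c i.castSucc * (∫ s in (0:ℝ)..1, s ^ ((i.castSucc : Fin (j+1)) : ℕ) * Real.exp s * ψ m s) = 0 := by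
      intro i
      rw [Fin.coe_castSucc, ih i i.isLt m (lt_trans i.isLt hjm), mul_zero]
    rw [Finset.sum_eq_zero (fun i _ => h2 i), zero_add] at h1
    have h3 : ((Fin.last j : Fin (j+1)) : ℕ) = j := rfl
    rw [h3] at h1
    have hc : c (Fin.last j) ≠ 0 := hc0
    exact (mul_eq_zero.mp h1.symm).resolve_left hc

private lemma M_eq (ψ : ℕ → ℝ → ℝ)
    (hψC1 : ∀ n, ContDiff ℝ 1 (ψ n))
    (horth : ∀ m n : ℕ, (∫ s in (0:ℝ)..1, ψ m s * ψ n s) = if m = n then 1 else 0)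
    (hform : ∀ n : ℕ, ∃ c : Fin (n + 1) → ℝ,
      c ⟨n, Nat.lt_succ_self n⟩ ≠ 0 ∧
      ∀ s : ℝ, ψ n s = ∑ k : Fin (n + 1), c k * s ^ (k : ℕ) * Real.exp s)
    (n m : ℕ) (hnm : n ≤ m) :
    (∫ s in (0:ℝ)..1, deriv (ψ n) s * ψ m s) = if n = m then 1 else 0 := by
  have hψ : ∀ n, Continuous (ψ n) := fun n => (hψC1 n).continuous
  obtain ⟨c, hc0, hcs⟩ := hform n
  -- derivative
  have hD : ∀ s : ℝ, deriv (ψ n) s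
      = ∑ i : Fin (n + 1),
          (c i * (((i : ℕ) : ℝ) * s ^ ((i : ℕ) - 1)) * Real.exp s
            + c i * s ^ (i : ℕ) * Real.exp s) := by
    intro s
    have hfun : ψ n = fun t => ∑ i : Fin (n + 1), c i * t ^ (i : ℕ) * Real.exp t :=
      funext hcs
    rw [hfun]
    have h : HasDerivAt (fun t : ℝ => ∑ i : Fin (n + 1), c i * t ^ (i : ℕ) * Real.exp t)
        (∑ i : Fin (n + 1),
          (c i * (((i : ℕ) : ℝ) * s ^ ((i : ℕ) - 1)) * Real.exp s
            + c i * s ^ (i : ℕ) * Real.exp s)) s :=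
      HasDerivAt.fun_sum (fun i _ =>
        ((hasDerivAt_pow (i : ℕ) s).const_mul (c i)).mul (Real.hasDerivAt_exp s))
    exact h.deriv
  have hint : ∀ s : ℝ, deriv (ψ n) s * ψ m s
      = ∑ i : Fin (n + 1),
          (c i * ((i : ℕ) : ℝ) * (s ^ ((i : ℕ) - 1) * Real.exp s * ψ m s)
            + c i * (s ^ (i : ℕ) * Real.exp s * ψ m s)) := by
    intro s
    rw [hD s, Finset.sum_mul]
    exact Finset.sum_congr rfl (fun i _ => by ring)
  have key := key_zero ψ hψ horth hform
  have hI : ∀ i : Fin (n + 1),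
      (∫ s in (0:ℝ)..1,
        (c i * ((i : ℕ) : ℝ) * (s ^ ((i : ℕ) - 1) * Real.exp s * ψ m s)
          + c i * (s ^ (i : ℕ) * Real.exp s * ψ m s)))
      = c i * ((i : ℕ) : ℝ) * (∫ s in (0:ℝ)..1, s ^ ((i : ℕ) - 1) * Real.exp s * ψ m s)
        + c i * (∫ s in (0:ℝ)..1, s ^ (i : ℕ) * Real.exp s * ψ m s) := by
    intro i
    rw [intervalIntegral.integral_add, intervalIntegral.integral_const_mul,
      intervalIntegral.integral_const_mul]
    · exact (continuous_const.mul (((continuous_pow _).mul Real.continuous_exp).mul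
        (hψ m))).intervalIntegrable _ _
    · exact (continuous_const.mul (((continuous_pow _).mul Real.continuous_exp).mul
        (hψ m))).intervalIntegrable _ _
  -- first summand always vanishes
  have hfirst : ∀ i : Fin (n + 1),
      c i * ((i : ℕ) : ℝ) * (∫ s in (0:ℝ)..1, s ^ ((i : ℕ) - 1) * Real.exp s * ψ m s) = 0 := by
    intro i
    rcases Nat.eq_zero_or_pos (i : ℕ) with h0 | hpos
    · rw [h0]; simp
    · have : (i : ℕ) - 1 < m := by
        have h1 : (i : ℕ) ≤ n := Nat.lt_succ_iff.mp i.isLt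
        have h2 : (i : ℕ) - 1 < (i : ℕ) := Nat.sub_lt hpos one_pos
        omega
      rw [key _ _ this, mul_zero]
  have hintegrable : ∀ i : Fin (n + 1), IntervalIntegrable
      (fun s => c i * ((i : ℕ) : ℝ) * (s ^ ((i : ℕ) - 1) * Real.exp s * ψ m s)
          + c i * (s ^ (i : ℕ) * Real.exp s * ψ m s)) volume (0:ℝ) 1 := by
    intro i
    exact ((continuous_const.mul (((continuous_pow _).mul Real.continuous_exp).mul
      (hψ m))).add (continuous_const.mul (((continuous_pow _).mul Real.continuous_exp).mul
      (hψ m)))).intervalIntegrable _ _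
  have hmain : (∫ s in (0:ℝ)..1, deriv (ψ n) s * ψ m s)
      = ∑ i : Fin (n + 1), c i * ∫ s in (0:ℝ)..1, s ^ (i : ℕ) * Real.exp s * ψ m s := by
    simp only [hint]
    rw [intervalIntegral.integral_finset_sum (fun i _ => hintegrable i)]
    exact Finset.sum_congr rfl (fun i _ => by rw [hI i, hfirst i, zero_add])
  rw [hmain, ← expand_integral ψ hψ n m c hcs, horth n m]

/-- For the orthonormal basis `ψ n` of `L²(0,1)` obtained by
Gram–Schmidt from `s ↦ sⁿ eˢ` (each `ψ n = Pₙ(s) eˢ` with `Pₙ` of degree exactly `n`),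
setting `a m n = ⟨ψₙ', ψₘ⟩`, for every `k ≥ 1` the `k × k` matrix
`M_k = (a m n)_{m,n=0}^{k-1}` is upper triangular with unit diagonal; in particular
`det M_k = 1` and `M_k` is invertible. -/
theorem gramSchmidt_deriv_matrix_unit_upper_triangular
    (ψ : ℕ → ℝ → ℝ)
    (hψC1 : ∀ n, ContDiff ℝ 1 (ψ n))
    (horth : ∀ m n : ℕ, (∫ s in (0:ℝ)..1, ψ m s * ψ n s) = if m = n then 1 else 0)
    (hform : ∀ n : ℕ, ∃ c : Fin (n + 1) → ℝ,
      c ⟨n, Nat.lt_succ_self n⟩ ≠ 0 ∧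
      ∀ s : ℝ, ψ n s = ∑ k : Fin (n + 1), c k * s ^ (k : ℕ) * Real.exp s)
    (k : ℕ) (hk : 1 ≤ k)
    (M : Matrix (Fin k) (Fin k) ℝ)
    (hM : ∀ m n : Fin k, M m n = ∫ s in (0:ℝ)..1, deriv (ψ n) s * ψ m s) :
    (∀ m n : Fin k, (n : ℕ) < (m : ℕ) → M m n = 0) ∧
    (∀ n : Fin k, M n n = 1) ∧
    M.det = 1 ∧ IsUnit M := by
  have hlow : ∀ m n : Fin k, (n : ℕ) < (m : ℕ) → M m n = 0 := by
    intro m n h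
    rw [hM m n, M_eq ψ hψC1 horth hform n m (le_of_lt h), if_neg (Nat.ne_of_lt h)]
  have hdiag : ∀ n : Fin k, M n n = 1 := by
    intro n
    rw [hM n n, M_eq ψ hψC1 horth hform n n le_rfl, if_pos rfl]
  have hdet : M.det = 1 := by
    rw [Matrix.det_of_upperTriangular (fun i j h => hlow i j h)]
    simp [hdiag]
  exact ⟨hlow, hdiag, hdet, by rw [Matrix.isUnit_iff_isUnit_det, hdet]; exact isUnit_one⟩
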